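/- Let k be a field and t_1, ..., t_d distinct integers with 0 ≤ t_i ≤ p for an odd prime p, and assume t_d is the maximal element of {t_1, ..., t_d}. Let X be a d×d upper triangular matrix over k[u] with i-th diagonal entry u^{t_i} and with (i,j)-entries x_{i,j} of degree strictly less than t_j for i < j, and let A ∈ GL_d(k). If for every i the power u^{t_i} divides every entry of the i-th column of X·A, then for all i < j one has x_{i,j} = u^{t_i}·y_{i,j} with y_{i,j} = 0 when t_j < t_i and y_{i,j} a constant in k when t_j > t_i. -/

import Mathlib

open Polynomial Matrix Finset

section Aux

variable {k : Type*} [Field k]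

/-- A polynomial divisible by `X^N` of degree `< N` is zero. -/
private lemma aux_dvd_zero (q : Polynomial k) (N : ℕ) (h : Polynomial.X ^ N ∣ q)
    (hd : q.degree < (N : WithBot ℕ)) : q = 0 := by
  ext m
  rcases lt_or_ge m N with hm | hm
  · exact (Polynomial.X_pow_dvd_iff).mp h m hm
  · simp only [Polynomial.coeff_zero]
    refine Polynomial.coeff_eq_zero_of_degree_lt (lt_of_lt_of_le hd ?_)
    exact_mod_cast Nat.cast_le.mpr hm

private lemma aux_vecMul {d : ℕ} (A : Matrix (Fin d) (Fin d) k) (hA : IsUnit A.det)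
    (v : Fin d → k) (h : ∀ i, ∑ l, v l * A l i = 0) : ∀ l, v l = 0 := by
  have hv : v ᵥ* A = 0 := by
    funext i
    simpa [Matrix.vecMul, dotProduct] using h i
  have h2 : (v ᵥ* A) ᵥ* A⁻¹ = v := by
    rw [Matrix.vecMul_vecMul, Matrix.mul_nonsing_inv A hA, Matrix.vecMul_one]
  rw [hv] at h2
  intro l
  rw [← h2]
  simp [Matrix.zero_vecMul]

private lemma aux_min {d : ℕ} (Y : Fin d → Fin d → k) (g c : Fin d → k)
    (hdiag : ∀ r, g r ≠ 0 → Y r r = 1)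
    (hlow : ∀ r l, g r ≠ 0 → l < r → Y r l = 0)
    (hc : ∀ r, g r ≠ 0 → c r = 0)
    (hsum : ∀ l, c l = ∑ r, g r * Y r l) : ∀ r, g r = 0 := by
  by_contra hcon
  push_neg at hcon
  obtain ⟨r, hr⟩ := hcon
  classical
  set S : Finset (Fin d) := Finset.univ.filter (fun r => g r ≠ 0) with hS
  have hne : S.Nonempty := ⟨r, by simp [hS, hr]⟩
  set r₀ := S.min' hne with hr₀
  have hgr₀ : g r₀ ≠ 0 := by
    have h1 := S.min'_mem hne
    have h2 : ∀ x ∈ S, g x ≠ 0 := by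
      intro x hx
      rw [hS] at hx
      simpa using hx
    exact h2 _ h1
  have hval : c r₀ = g r₀ := by
    rw [hsum r₀, Finset.sum_eq_single r₀]
    · rw [hdiag r₀ hgr₀, mul_one]
    · intro b _ hb
      by_cases hgb : g b = 0
      · simp [hgb]
      · have hbS : b ∈ S := by simp [hS, hgb]
        have hlt : r₀ < b := lt_of_le_of_ne (S.min'_le b hbS) (Ne.symm hb)
        rw [hlow b r₀ hgb hlt, mul_zero]
    · intro h; exact absurd (Finset.mem_univ r₀) h
  rw [hc r₀ hgr₀] at hval
  exact hgr₀ hval.symm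

private lemma aux_span {d : ℕ} (A : Matrix (Fin d) (Fin d) k) (hA : IsUnit A.det)
    (P : Fin d → Prop) [DecidablePred P]
    (Y : Fin d → Fin d → k)
    (hdiag : ∀ r, Y r r = 1)
    (hlow : ∀ r l, l < r → Y r l = 0)
    (hQ : ∀ r i, P r → ¬ P i → ∑ l, Y r l * A l i = 0)
    (c : Fin d → k)
    (hcA : ∀ i, ¬ P i → ∑ l, c l * A l i = 0)
    (hcP : ∀ r, P r → c r = 0) : ∀ l, c l = 0 := by
  classical
  set zf : Fin d → (Fin d → k) := fun r i => ∑ l, Y r l * A l i with hzf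
  set z : {i : Fin d // P i} → ({i : Fin d // P i} → k) :=
    fun r i => zf r.1 i.1 with hz
  have hconv : ∀ (G : Fin d → k) (f : Fin d → k), (∀ r, ¬ P r → G r = 0) →
      ∑ r, G r * f r = ∑ r : {i : Fin d // P i}, G r.1 * f r.1 := by
    intro G f hG
    rw [← Finset.sum_subtype (Finset.univ.filter P)
      (by intro x; simp) (fun r => G r * f r)]
    refine (Finset.sum_filter_of_ne ?_).symm
    intro x _ hx
    by_contra hPx
    exact hx (by rw [hG x hPx, zero_mul])
  have hswap : ∀ (G : Fin d → k) (i : Fin d),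
      ∑ l, (∑ r, G r * Y r l) * A l i = ∑ r, G r * zf r i := by
    intro G i
    calc ∑ l, (∑ r, G r * Y r l) * A l i
        = ∑ l, ∑ r, G r * Y r l * A l i := by simp [Finset.sum_mul]
      _ = ∑ r, ∑ l, G r * Y r l * A l i := Finset.sum_comm
      _ = ∑ r, G r * zf r i := by simp [hzf, Finset.mul_sum, mul_assoc]
  have hzf0 : ∀ (r i : Fin d), P r → ¬ P i → zf r i = 0 := by
    intro r i h1 h2; exact hQ r i h1 h2
  have hindep : LinearIndependent k z := by
    rw [Fintype.linearIndependent_iff]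
    intro g hg
    set G : Fin d → k := fun r => if h : P r then g ⟨r, h⟩ else 0 with hG
    have hG0 : ∀ r, ¬ P r → G r = 0 := fun r h => by simp [hG, h]
    have hkey : ∀ i, ∑ l, (∑ r, G r * Y r l) * A l i = 0 := by
      intro i
      rw [hswap]
      by_cases hPi : P i
      · have h1 := congrFun hg ⟨i, hPi⟩
        rw [hconv G (fun r => zf r i) hG0]
        calc ∑ r : {i : Fin d // P i}, G r.1 * zf r.1 i
            = ∑ r : {i : Fin d // P i}, g r * z r ⟨i, hPi⟩ := by
              refine Finset.sum_congr rfl fun r _ => ?_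
              have : G r.1 = g r := by simp [hG, r.2]
              rw [this]
          _ = 0 := by simpa [Finset.sum_apply] using h1
      · refine Finset.sum_eq_zero fun r _ => ?_
        by_cases hPr : P r
        · rw [hzf0 r i hPr hPi, mul_zero]
        · rw [hG0 r hPr, zero_mul]
    have hYsum : ∀ l, ∑ r, G r * Y r l = 0 := aux_vecMul A hA _ hkey
    have hGz : ∀ r, G r = 0 := by
      refine aux_min Y G (fun _ => (0 : k)) (fun r _ => hdiag r)
        (fun r l _ h => hlow r l h) (fun _ _ => rfl) (fun l => (hYsum l).symm)
    intro r
    have := hGz r.1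
    simpa [hG, r.2] using this
  have hcard : Fintype.card {i : Fin d // P i}
      = Module.finrank k ({i : Fin d // P i} → k) :=
    (Module.finrank_fintype_fun_eq_card k).symm
  have hspan := hindep.span_eq_top_of_card_eq_finrank' hcard
  set c' : {i : Fin d // P i} → k := fun i => ∑ l, c l * A l i.1 with hc'
  have hmem : c' ∈ Submodule.span k (Set.range z) := hspan ▸ Submodule.mem_top
  obtain ⟨g, hg⟩ := (Submodule.mem_span_range_iff_exists_fun k).mp hmem
  set Λ : Fin d → k := fun r => if h : P r then g ⟨r, h⟩ else 0 with hΛ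
  have hΛ0 : ∀ r, ¬ P r → Λ r = 0 := fun r h => by simp [hΛ, h]
  have hw : ∀ i, ∑ l, (c l - ∑ r, Λ r * Y r l) * A l i = 0 := by
    intro i
    have expand : ∑ l, (c l - ∑ r, Λ r * Y r l) * A l i
        = (∑ l, c l * A l i) - ∑ l, (∑ r, Λ r * Y r l) * A l i := by
      simp [sub_mul, Finset.sum_sub_distrib]
    rw [expand, hswap]
    by_cases hPi : P i
    · have h1 := congrFun hg ⟨i, hPi⟩
      rw [hconv Λ (fun r => zf r i) hΛ0]
      have h2 : ∑ r : {i : Fin d // P i}, Λ r.1 * zf r.1 i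
          = ∑ r : {i : Fin d // P i}, g r * z r ⟨i, hPi⟩ := by
        refine Finset.sum_congr rfl fun r _ => ?_
        have : Λ r.1 = g r := by simp [hΛ, r.2]
        rw [this]
      rw [h2]
      have h3 : ∑ r : {i : Fin d // P i}, g r * z r ⟨i, hPi⟩ = c' ⟨i, hPi⟩ := by
        simpa [Finset.sum_apply] using h1
      rw [h3, hc']
      simp
    · rw [hcA i hPi]
      have : ∑ r, Λ r * zf r i = 0 := by
        refine Finset.sum_eq_zero fun r _ => ?_
        by_cases hPr : P r
        · rw [hzf0 r i hPr hPi, mul_zero]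
        · rw [hΛ0 r hPr, zero_mul]
      rw [this, sub_zero]
  have hw0 : ∀ l, c l - ∑ r, Λ r * Y r l = 0 := aux_vecMul A hA _ hw
  have hsum : ∀ l, c l = ∑ r, Λ r * Y r l := fun l => eq_of_sub_eq_zero (hw0 l)
  have hΛz : ∀ r, Λ r = 0 := by
    refine aux_min Y Λ c (fun r _ => hdiag r) (fun r l _ h => hlow r l h)
      (fun r hr => hcP r ?_) hsum
    by_contra hPr
    exact hr (hΛ0 r hPr)
  intro l
  rw [hsum l]
  exact Finset.sum_eq_zero fun r _ => by rw [hΛz r, zero_mul]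

end Aux

section Key

variable {k : Type*} [Field k]

/-- The general key matrix lemma (no maximality assumption needed). -/
theorem keyLemma : ∀ (n : ℕ) (t : Fin (n+1) → ℕ), Function.Injective t →
    ∀ (X : Matrix (Fin (n+1)) (Fin (n+1)) (Polynomial k)),
    (∀ i j, j < i → X i j = 0) →
    (∀ i, X i i = Polynomial.X ^ (t i)) →
    (∀ i j, i < j → (X i j).degree < (t j : WithBot ℕ)) →
    ∀ (A : Matrix (Fin (n+1)) (Fin (n+1)) k), IsUnit A.det →
    (∀ i j, (Polynomial.X : Polynomial k) ^ (t i) ∣ (X * A.map Polynomial.C) j i) →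
    ∀ i j, i < j → ∃ y : k,
      X i j = Polynomial.C y * Polynomial.X ^ (t i) ∧ (t j < t i → y = 0) := by
  intro n
  induction n with
  | zero =>
      intro t _ X _ _ _ A _ _ i j hij
      have : i = j := by omega
      exact absurd (this ▸ hij) (lt_irrefl j)
  | succ n IH =>
      intro t ht_inj X hX_lower hX_diag hX_deg A hA hdvd
      classical
      obtain ⟨j₀, hj₀⟩ := Finite.exists_max t
      have hstrict : ∀ l, l ≠ j₀ → t l < t j₀ := fun l h =>
        lt_of_le_of_ne (hj₀ l) (fun e => h (ht_inj e))
      have hmulA : ∀ (B : Matrix (Fin (n+2)) (Fin (n+2)) k) (r i : Fin (n+2)),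
          (X * B.map Polynomial.C) r i = ∑ l, X r l * Polynomial.C (B l i) := by
        intro B r i
        simp [Matrix.mul_apply, Matrix.map_apply]
      have hdegC : ∀ (p : Polynomial k) (b : k), (p * Polynomial.C b).degree ≤ p.degree := by
        intro p b
        refine le_trans (Polynomial.degree_mul_le _ _) ?_
        calc p.degree + (Polynomial.C b).degree ≤ p.degree + 0 :=
              add_le_add le_rfl Polynomial.degree_C_le
          _ = p.degree := add_zero _
      -- Step 1: relations from column j₀
      have hR : ∀ r, r ≠ j₀ → ∑ l, X r l * Polynomial.C (A l j₀) = 0 := by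
        intro r hr
        have hd := hdvd j₀ r
        rw [hmulA] at hd
        refine aux_dvd_zero _ (t j₀) hd ?_
        refine lt_of_le_of_lt (Polynomial.degree_sum_le _ _) ?_
        rw [Finset.sup_lt_iff (WithBot.bot_lt_coe _)]
        intro l _
        rcases lt_trichotomy l r with h1 | h1 | h1
        · rw [hX_lower r l h1, zero_mul]
          exact WithBot.bot_lt_coe _
        · subst h1
          refine lt_of_le_of_lt (hdegC _ _) ?_
          rw [hX_diag l, Polynomial.degree_X_pow]
          exact_mod_cast hstrict l hr
        · refine lt_of_le_of_lt (hdegC _ _) ?_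
          refine lt_of_lt_of_le (hX_deg r l h1) ?_
          exact_mod_cast hj₀ l
      -- Step 2: the pivot entry of A is nonzero
      have ha : A j₀ j₀ ≠ 0 := by
        intro ha0
        have hcol : ∀ l, A l j₀ = 0 := by
          by_contra hcc
          push_neg at hcc
          obtain ⟨l, hl⟩ := hcc
          set S : Finset (Fin (n+2)) := Finset.univ.filter (fun l => A l j₀ ≠ 0) with hS
          have hne : S.Nonempty := ⟨l, by simp [hS, hl]⟩
          set l₀ := S.max' hne with hl₀
          have hal₀ : A l₀ j₀ ≠ 0 := by
            have h1 := S.max'_mem hne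
            have h2 : ∀ x ∈ S, A x j₀ ≠ 0 := by
              intro x hx; rw [hS] at hx; simpa using hx
            exact h2 _ h1
          have hl₀j : l₀ ≠ j₀ := by
            intro e
            rw [e] at hal₀
            exact hal₀ ha0
          have h0 := hR l₀ hl₀j
          have hsingle : ∑ l, X l₀ l * Polynomial.C (A l j₀)
              = X l₀ l₀ * Polynomial.C (A l₀ j₀) := by
            refine Finset.sum_eq_single l₀ ?_ ?_
            · intro b _ hb
              rcases lt_or_gt_of_ne hb with hbl | hbl
              · rw [hX_lower l₀ b hbl, zero_mul]
              · have hz : A b j₀ = 0 := by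
                  by_contra hab
                  have hbS : b ∈ S := by simp [hS, hab]
                  exact absurd (S.le_max' b hbS) (not_le.mpr hbl)
                rw [hz, Polynomial.C_0, mul_zero]
            · intro h; exact absurd (Finset.mem_univ l₀) h
          rw [hsingle, hX_diag l₀] at h0
          rcases mul_eq_zero.mp h0 with h | h
          · exact absurd h (pow_ne_zero _ Polynomial.X_ne_zero)
          · exact hal₀ (by simpa using h)
        exact (IsUnit.ne_zero hA) (Matrix.det_eq_zero_of_column_eq_zero j₀ hcol)
      -- Step 3: column operations clearing row j₀ of A
      set a := A j₀ j₀ with ha_def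
      set E : Matrix (Fin (n+2)) (Fin (n+2)) k := fun p q =>
        if p = j₀ then (if q = j₀ then 1 else -(A j₀ q) * a⁻¹)
        else (if p = q then 1 else 0) with hE
      set B := A * E with hB
      have hEcol : ∀ p, E p j₀ = if p = j₀ then 1 else 0 := by
        intro p
        by_cases hp : p = j₀ <;> simp [hE, hp]
      have hBcol : ∀ l, B l j₀ = A l j₀ := by
        intro l
        rw [hB, Matrix.mul_apply]
        calc ∑ p, A l p * E p j₀ = ∑ p, A l p * (if p = j₀ then 1 else 0) := by
              refine Finset.sum_congr rfl fun p _ => by rw [hEcol p]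
          _ = A l j₀ := by simp
      have hBother : ∀ l i, i ≠ j₀ → B l i = A l i + A l j₀ * (-(A j₀ i) * a⁻¹) := by
        intro l i hi
        rw [hB, Matrix.mul_apply]
        have hEi : ∀ p, E p i
            = (if p = i then 1 else 0) + (if p = j₀ then -(A j₀ i) * a⁻¹ else 0) := by
          intro p
          by_cases hp : p = j₀
          · subst hp
            simp [hE, hi, Ne.symm hi]
          · by_cases hpi : p = i <;> simp [hE, hp, hpi, hi]
        calc ∑ p, A l p * E p i
            = ∑ p, (A l p * (if p = i then 1 else 0)
                + A l p * (if p = j₀ then -(A j₀ i) * a⁻¹ else 0)) := by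
              refine Finset.sum_congr rfl fun p _ => by rw [hEi p, mul_add]
          _ = A l i + A l j₀ * (-(A j₀ i) * a⁻¹) := by
              rw [Finset.sum_add_distrib]
              congr 1 <;> simp [mul_ite]
      have hBrow : ∀ i, i ≠ j₀ → B j₀ i = 0 := by
        intro i hi
        rw [hBother j₀ i hi, ← ha_def]
        field_simp
        ring
      have hBjj : B j₀ j₀ = a := hBcol j₀
      have hdetE : E.det = 1 := by
        rw [Matrix.det_succ_column E j₀]
        have hsub : E.submatrix j₀.succAbove j₀.succAbove = 1 := by
          ext p q
          have h1 : j₀.succAbove p ≠ j₀ := Fin.succAbove_ne j₀ p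
          rw [Matrix.submatrix_apply]
          simp [hE, h1, Matrix.one_apply,
            (Fin.succAbove_right_injective (p := j₀)).eq_iff]
        rw [Finset.sum_eq_single j₀]
        · rw [hsub, Matrix.det_one, hEcol j₀, if_pos rfl]
          have : (-1 : k) ^ ((j₀ : ℕ) + (j₀ : ℕ)) = 1 := Even.neg_one_pow ⟨j₀, rfl⟩
          rw [this, one_mul, mul_one]
        · intro b _ hb
          rw [hEcol b, if_neg hb, mul_zero, zero_mul]
        · intro h; exact absurd (Finset.mem_univ j₀) h
      have hdetB : B.det = A.det := by rw [hB, Matrix.det_mul, hdetE, mul_one]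
      have hBdvd : ∀ i r, (Polynomial.X : Polynomial k) ^ (t i) ∣ (X * B.map Polynomial.C) r i := by
        intro i r
        rw [hmulA]
        by_cases hi : i = j₀
        · subst hi
          have hsame : ∑ l, X r l * Polynomial.C (B l i) = ∑ l, X r l * Polynomial.C (A l i) := by
            refine Finset.sum_congr rfl fun l _ => by rw [hBcol l]
          rw [hsame, ← hmulA]
          exact hdvd i r
        · have hsplit : ∑ l, X r l * Polynomial.C (B l i)
              = (∑ l, X r l * Polynomial.C (A l i))
                + (∑ l, X r l * Polynomial.C (A l j₀)) * Polynomial.C (-(A j₀ i) * a⁻¹) := by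
            rw [Finset.sum_mul, ← Finset.sum_add_distrib]
            refine Finset.sum_congr rfl fun l _ => ?_
            rw [hBother l i hi, Polynomial.C_add, Polynomial.C_mul, mul_add]
            ring
          rw [hsplit]
          refine dvd_add ?_ ?_
          · rw [← hmulA]; exact hdvd i r
          · refine Dvd.dvd.mul_right ?_ _
            refine dvd_trans (pow_dvd_pow _ (hj₀ i)) ?_
            rw [← hmulA]; exact hdvd j₀ r
      -- Step 4: the reduced instance
      have hsA_lt : ∀ {i j : Fin (n+1)}, j₀.succAbove i < j₀.succAbove j ↔ i < j :=
        fun {i j} => Fin.succAbove_lt_succAbove_iff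
      have ht'_inj : Function.Injective (fun i => t (j₀.succAbove i)) := by
        intro i j h
        exact Fin.succAbove_right_injective (ht_inj h)
      have hX'_lower : ∀ i j : Fin (n+1), j < i →
          X.submatrix j₀.succAbove j₀.succAbove i j = 0 := by
        intro i j h
        exact hX_lower _ _ (hsA_lt.mpr h)
      have hX'_diag : ∀ i : Fin (n+1), X.submatrix j₀.succAbove j₀.succAbove i i
          = Polynomial.X ^ (t (j₀.succAbove i)) := fun i => hX_diag _
      have hX'_deg : ∀ i j : Fin (n+1), i < j →
          (X.submatrix j₀.succAbove j₀.succAbove i j).degree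
            < ((t (j₀.succAbove j) : ℕ) : WithBot ℕ) := by
        intro i j h
        exact hX_deg _ _ (hsA_lt.mpr h)
      have hdetA' : IsUnit (B.submatrix j₀.succAbove j₀.succAbove).det := by
        have hexp : B.det = a * (B.submatrix j₀.succAbove j₀.succAbove).det := by
          rw [Matrix.det_succ_row B j₀]
          rw [Finset.sum_eq_single j₀]
          · rw [hBjj]
            have : (-1 : k) ^ ((j₀ : ℕ) + (j₀ : ℕ)) = 1 := Even.neg_one_pow ⟨j₀, rfl⟩
            rw [this, one_mul]
          · intro b _ hb
            rw [hBrow b hb, mul_zero, zero_mul]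
          · intro h; exact absurd (Finset.mem_univ j₀) h
        rw [isUnit_iff_ne_zero]
        intro h0
        apply IsUnit.ne_zero hA
        rw [← hdetB, hexp, h0, mul_zero]
      have hdvd' : ∀ i r : Fin (n+1), (Polynomial.X : Polynomial k) ^ (t (j₀.succAbove i))
          ∣ (X.submatrix j₀.succAbove j₀.succAbove
              * (B.submatrix j₀.succAbove j₀.succAbove).map Polynomial.C) r i := by
        intro i r
        have key : (X.submatrix j₀.succAbove j₀.succAbove
              * (B.submatrix j₀.succAbove j₀.succAbove).map Polynomial.C) r i
            = (X * B.map Polynomial.C) (j₀.succAbove r) (j₀.succAbove i) := by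
          rw [hmulA]
          rw [Fin.sum_univ_succAbove
            (fun l => X (j₀.succAbove r) l * Polynomial.C (B l (j₀.succAbove i))) j₀]
          rw [hBrow (j₀.succAbove i) (Fin.succAbove_ne j₀ i), Polynomial.C_0, mul_zero, zero_add]
          simp [Matrix.mul_apply, Matrix.map_apply, Matrix.submatrix_apply]
        rw [key]
        exact hBdvd (j₀.succAbove i) (j₀.succAbove r)
      have IH' := IH (fun i => t (j₀.succAbove i)) ht'_inj
        (X.submatrix j₀.succAbove j₀.succAbove) hX'_lower hX'_diag hX'_deg
        (B.submatrix j₀.succAbove j₀.succAbove) hdetA' hdvd'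
      -- Step 5: rows other than j₀ are constants times X^(t r)
      set Yc : Fin (n+2) → Fin (n+2) → k := fun r l => (X r l).coeff (t r) with hYc
      have coeff_eq : ∀ (q : Polynomial k) (N : ℕ) (y : k),
          q = Polynomial.C y * Polynomial.X ^ N →
          q = Polynomial.C (q.coeff N) * Polynomial.X ^ N := by
        intro q N y h
        rw [h]
        congr 1
        rw [Polynomial.coeff_C_mul, Polynomial.coeff_X_pow, if_pos rfl, mul_one]
      have hYdiag : ∀ r, Yc r r = 1 := by
        intro r
        rw [hYc]
        simp [hX_diag r, Polynomial.coeff_X_pow]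
      have hYlow : ∀ r l, l < r → Yc r l = 0 := by
        intro r l h
        rw [hYc]
        simp [hX_lower r l h]
      have hYeq' : ∀ r, r ≠ j₀ → ∀ l, l ≠ j₀ →
          X r l = Polynomial.C (Yc r l) * Polynomial.X ^ (t r) := by
        intro r hr l hl
        obtain ⟨r', hr'⟩ := Fin.exists_succAbove_eq hr
        obtain ⟨l', hl'⟩ := Fin.exists_succAbove_eq hl
        rcases lt_trichotomy l r with h1 | h1 | h1
        · rw [hYlow r l h1, hX_lower r l h1, Polynomial.C_0, zero_mul]
        · subst h1
          rw [hYdiag l, hX_diag l, Polynomial.C_1, one_mul]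
        · have h2 : r' < l' := hsA_lt.mp (by rw [hr', hl']; exact h1)
          obtain ⟨y, hy, _⟩ := IH' r' l' h2
          refine coeff_eq _ _ y ?_
          have : X (j₀.succAbove r') (j₀.succAbove l')
              = Polynomial.C y * Polynomial.X ^ (t (j₀.succAbove r')) := hy
          rw [hr', hl'] at this
          exact this
      have hYeqj : ∀ r, r ≠ j₀ → X r j₀ = Polynomial.C (Yc r j₀) * Polynomial.X ^ (t r) := by
        intro r hr
        have h0 := hR r hr
        rw [← Finset.add_sum_erase _ _ (Finset.mem_univ j₀)] at h0
        have hrest : ∑ l ∈ Finset.univ.erase j₀, X r l * Polynomial.C (A l j₀)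
            = Polynomial.C (∑ l ∈ Finset.univ.erase j₀, Yc r l * A l j₀)
              * Polynomial.X ^ (t r) := by
          rw [map_sum, Finset.sum_mul]
          refine Finset.sum_congr rfl fun l hl => ?_
          have hl' : l ≠ j₀ := Finset.ne_of_mem_erase hl
          rw [hYeq' r hr l hl', Polynomial.C_mul]
          ring
        rw [hrest] at h0
        set g := ∑ l ∈ Finset.univ.erase j₀, Yc r l * A l j₀ with hg
        have heq : X r j₀ * Polynomial.C a = Polynomial.C (-g) * Polynomial.X ^ (t r) := by
          rw [map_neg, neg_mul]
          rw [eq_neg_iff_add_eq_zero]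
          exact h0
        have hfin : X r j₀ = Polynomial.C (-g * a⁻¹) * Polynomial.X ^ (t r) := by
          have hXa : X r j₀ * Polynomial.C a * Polynomial.C a⁻¹ = X r j₀ := by
            rw [mul_assoc, ← Polynomial.C_mul, mul_inv_cancel₀ ha, Polynomial.C_1, mul_one]
          rw [← hXa, heq, Polynomial.C_mul]
          ring
        exact coeff_eq _ _ _ hfin
      have hY : ∀ r, r ≠ j₀ → ∀ l, X r l = Polynomial.C (Yc r l) * Polynomial.X ^ (t r) := by
        intro r hr l
        by_cases hl : l = j₀
        · subst hl; exact hYeqj r hr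
        · exact hYeq' r hr l hl
      -- Step 6: conclusion
      intro i j hij
      by_cases hi : i = j₀
      · subst hi
        have hjne : j ≠ i := hij.ne'
        have hXz : X i j = 0 := by
          have hcoeff : ∀ m, m < t j → (X i j).coeff m = 0 := by
            intro m hm
            have hmj₀ : m < t i := lt_trans hm (hstrict j hjne)
            set c : Fin (n+2) → k := fun l => if i < l then (X i l).coeff m else 0 with hcdef
            have hc_pos : ∀ l, i < l → c l = (X i l).coeff m := by
              intro l h; simp [hcdef, h]
            have hc_neg : ∀ l, ¬ i < l → c l = 0 := by
              intro l h; simp [hcdef, h]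
            have hQ_ : ∀ r i2, t r ≤ m → ¬ (t i2 ≤ m) → ∑ l, Yc r l * A l i2 = 0 := by
              intro r i2 hPr hPi2
              have hrj : r ≠ i := by
                intro e
                rw [e] at hPr
                omega
              have hti2 : t r < t i2 := lt_of_le_of_lt hPr (not_le.mp hPi2)
              have hd := hdvd i2 r
              rw [hmulA] at hd
              have hsum2 : ∑ l, X r l * Polynomial.C (A l i2)
                  = Polynomial.C (∑ l, Yc r l * A l i2) * Polynomial.X ^ (t r) := by
                rw [map_sum, Finset.sum_mul]
                refine Finset.sum_congr rfl fun l _ => ?_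
                rw [hY r hrj l, Polynomial.C_mul]
                ring
              rw [hsum2] at hd
              have hz := (Polynomial.X_pow_dvd_iff.mp hd) (t r) hti2
              rwa [Polynomial.coeff_C_mul, Polynomial.coeff_X_pow, if_pos rfl, mul_one] at hz
            have hcA_ : ∀ i2, ¬ (t i2 ≤ m) → ∑ l, c l * A l i2 = 0 := by
              intro i2 hPi2
              have hmi2 : m < t i2 := not_le.mp hPi2
              have hd := hdvd i2 i
              rw [hmulA] at hd
              have hz := (Polynomial.X_pow_dvd_iff.mp hd) m hmi2
              rw [Polynomial.finset_sum_coeff] at hz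
              rw [← hz]
              refine Finset.sum_congr rfl fun l _ => ?_
              rw [Polynomial.coeff_mul_C]
              rcases lt_trichotomy l i with h1 | h1 | h1
              · rw [hc_neg l (not_lt_of_gt h1), hX_lower i l h1]
                simp
              · subst h1
                rw [hc_neg l (lt_irrefl l), hX_diag l, Polynomial.coeff_X_pow,
                  if_neg (by omega), zero_mul]
              · rw [hc_pos l h1]
            have hcP_ : ∀ r, t r ≤ m → c r = 0 := by
              intro r hPr
              by_cases h1 : i < r
              · rw [hc_pos r h1]
                refine Polynomial.coeff_eq_zero_of_degree_lt ?_
                refine lt_of_lt_of_le (hX_deg i r h1) ?_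
                exact_mod_cast hPr
              · exact hc_neg r h1
            have hres := aux_span A hA (fun r => t r ≤ m) Yc hYdiag hYlow hQ_ c hcA_ hcP_
            have hcj := hres j
            rw [hc_pos j hij] at hcj
            exact hcj
          ext m
          simp only [Polynomial.coeff_zero]
          rcases lt_or_ge m (t j) with hm | hm
          · exact hcoeff m hm
          · exact Polynomial.coeff_eq_zero_of_degree_lt
              (lt_of_lt_of_le (hX_deg i j hij) (by exact_mod_cast hm))
        exact ⟨0, by rw [hXz, Polynomial.C_0, zero_mul], fun _ => rfl⟩
      · by_cases hj : j = j₀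
        · subst hj
          exact ⟨Yc i j, hYeqj i hi, fun hlt => absurd hlt (not_lt.mpr (hj₀ i))⟩
        · obtain ⟨i', hi'⟩ := Fin.exists_succAbove_eq hi
          obtain ⟨j', hj'⟩ := Fin.exists_succAbove_eq hj
          have hij' : i' < j' := hsA_lt.mp (by rw [hi', hj']; exact hij)
          obtain ⟨y, h1, h2⟩ := IH' i' j' hij'
          refine ⟨y, ?_, ?_⟩
          · rw [← hi', ← hj']
            exact h1
          · intro hlt
            refine h2 ?_
            show t (j₀.succAbove j') < t (j₀.succAbove i')
            rw [hi', hj']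
            exact hlt


end Key

/-- Sublemma 4.3 of the paper: the case of the key matrix lemma
in which the last exponent `t_d` is maximal. -/
theorem stmt4 {k : Type*} [Field k] {p n : ℕ} (hp : p.Prime) (hodd : Odd p)
    (t : Fin (n + 1) → ℕ) (ht_inj : Function.Injective t) (ht_le : ∀ i, t i ≤ p)
    (hmax : ∀ i, t i ≤ t (Fin.last n))
    (X : Matrix (Fin (n + 1)) (Fin (n + 1)) (Polynomial k))
    (hX_lower : ∀ i j : Fin (n + 1), j < i → X i j = 0)
    (hX_diag : ∀ i : Fin (n + 1), X i i = Polynomial.X ^ (t i))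
    (hX_deg : ∀ i j : Fin (n + 1), i < j → (X i j).degree < (t j : WithBot ℕ))
    (A : Matrix (Fin (n + 1)) (Fin (n + 1)) k) (hA : IsUnit A.det)
    (hdvd : ∀ i j : Fin (n + 1),
      (Polynomial.X : Polynomial k) ^ (t i) ∣ (X * A.map Polynomial.C) j i) :
    ∀ i j : Fin (n + 1), i < j → ∃ y : k,
      X i j = Polynomial.C y * Polynomial.X ^ (t i) ∧ (t j < t i → y = 0) := by
  exact keyLemma n t ht_inj X hX_lower hX_diag hX_deg A hA hdvd
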